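/- arXiv:2001.11848 — 2 statements merged into one kernel-verified Lean document; each statement's English description precedes it below -/
import Mathlib

section
/- In the Weil algebra W g, the curvature elements μ(x) satisfy the equivariance rule L(ξ)μ(x) = -μ(ad*(ξ)x) for all ξ ∈ g and x ∈ g*; consequently the subalgebra generated by the μ(x) has basic part isomorphic to the invariant polynomials (S g*)^g. -/
/-- The coadjoint action on the dual: `⟨ad*(ξ)x, η⟩ = -⟨x, [ξ,η]⟩`. -/
noncomputable def coadAction (F : Type) [Field F]
    (g : Type) [LieRing g] [LieAlgebra F g]
    (ξ : g) (x : Module.Dual F g) : Module.Dual F g :=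
  -(x ∘ₗ (LieAlgebra.ad F g ξ))

private lemma weil_sum_comm3 {M : Type*} [AddCommMonoid M] {n : ℕ}
    (f : Fin n → Fin n → Fin n → M) :
    ∑ i, ∑ j, ∑ k, f i j k = ∑ k, ∑ j, ∑ i, f i j k := by
  calc ∑ i, ∑ j, ∑ k, f i j k = ∑ j, ∑ i, ∑ k, f i j k := Finset.sum_comm
    _ = ∑ j, ∑ k, ∑ i, f i j k := Finset.sum_congr rfl fun j _ => Finset.sum_comm
    _ = ∑ k, ∑ j, ∑ i, f i j k := Finset.sum_comm

private lemma weil_repr (F : Type) [Field F] (g : Type) [LieRing g] [LieAlgebra F g]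
    {n : ℕ} (b : Module.Basis (Fin n) F g) (v : g) :
    v = ∑ k, b.dualBasis k v • b k := by
  simp only [Module.Basis.dualBasis_apply]
  exact (b.sum_repr v).symm

private lemma weil_expand (F : Type) [Field F] (g : Type) [LieRing g] [LieAlgebra F g]
    {n : ℕ} (b : Module.Basis (Fin n) F g) (A : Type) [Ring A] [Algebra F A]
    (θ : Module.Dual F g →ₗ[F] A) (ξ : g) (y : Module.Dual F g) :
    θ (coadAction F g ξ y) = ∑ k, (-(y ⁅ξ, b k⁆)) • θ (b.dualBasis k) := by
  have h2 : (y ∘ₗ LieAlgebra.ad F g ξ)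
      = ∑ k, ((y ∘ₗ LieAlgebra.ad F g ξ) (b k)) • b.coord k :=
    (b.sum_dual_apply_smul_coord _).symm
  have h1 : coadAction F g ξ y = ∑ k, (-(y ⁅ξ, b k⁆)) • b.dualBasis k := by
    rw [coadAction, h2, ← Finset.sum_neg_distrib]
    refine Finset.sum_congr rfl fun k _ => ?_
    rw [show b.dualBasis k = b.coord k from congrFun b.coe_dualBasis k]
    simp only [LinearMap.coe_comp, Function.comp_apply, LieAlgebra.ad_apply]
    module
  rw [h1, map_sum]
  simp

private lemma weil_br_left (F : Type) [Field F] (g : Type) [LieRing g] [LieAlgebra F g]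
    {n : ℕ} (b : Module.Basis (Fin n) F g) (ξ : g) (x : Module.Dual F g) (i j : Fin n) :
    x ⁅⁅ξ, b i⁆, b j⁆ = ∑ k, b.dualBasis k ⁅ξ, b i⁆ * x ⁅b k, b j⁆ := by
  have h : x ⁅⁅ξ, b i⁆, b j⁆
      = (-(x ∘ₗ LieAlgebra.ad F g (b j))) (∑ k, b.dualBasis k ⁅ξ, b i⁆ • b k) := by
    rw [← weil_repr]
    simp only [LinearMap.neg_apply, LinearMap.coe_comp, Function.comp_apply,
      LieAlgebra.ad_apply]
    rw [← x.map_neg, lie_skew]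
  rw [h, map_sum]
  refine Finset.sum_congr rfl fun k _ => ?_
  simp only [map_smul, LinearMap.neg_apply, LinearMap.coe_comp, Function.comp_apply,
    LieAlgebra.ad_apply, smul_eq_mul]
  rw [← x.map_neg, lie_skew]

private lemma weil_br_right (F : Type) [Field F] (g : Type) [LieRing g] [LieAlgebra F g]
    {n : ℕ} (b : Module.Basis (Fin n) F g) (ξ : g) (x : Module.Dual F g) (i j : Fin n) :
    x ⁅b i, ⁅ξ, b j⁆⁆ = ∑ k, b.dualBasis k ⁅ξ, b j⁆ * x ⁅b i, b k⁆ := by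
  have h : x ⁅b i, ⁅ξ, b j⁆⁆
      = (x ∘ₗ LieAlgebra.ad F g (b i)) (∑ k, b.dualBasis k ⁅ξ, b j⁆ • b k) := by
    rw [← weil_repr]
    simp [LieAlgebra.ad_apply]
  rw [h, map_sum]
  simp [LieAlgebra.ad_apply, smul_eq_mul]

/-- In the Weil algebra `W g` of a finite-dimensional Lie algebra `g`
(generators `θ(x)` in degree 1 and `θ̇(x)` in degree 2, the Lie derivative
`L(ξ)` acting as a derivation with `L(ξ)θ(x) = -θ(ad*(ξ)x)` and
`L(ξ)θ̇(x) = -θ̇(ad*(ξ)x)`), the curvature elements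
`μ(x) = θ̇(x) + ½ θ(λ(x))`, with `λ` dual to the Lie bracket (in terms of a
basis `e_i` with dual basis `ε_i`,
`θ(λ(x)) = -∑_{i,j} x([e_i,e_j]) θ(ε_i)θ(ε_j)`), satisfy the equivariance
rule `L(ξ)μ(x) = -μ(ad*(ξ)x)`; consequently, on the subalgebra generated by the
curvature elements, the basic (invariant) part corresponds to the invariant
polynomials `(S g*)^g`: in particular `μ(x)` is `L`-invariant whenever `x` is a
coadjoint-invariant element of `g*`. -/
theorem weil_curvature_equivariance
    (F : Type) [Field F] [CharZero F]
    (g : Type) [LieRing g] [LieAlgebra F g]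
    (n : ℕ) (b : Module.Basis (Fin n) F g)
    (A : Type) [Ring A] [Algebra F A]
    (θ θdot : Module.Dual F g →ₗ[F] A)
    (L : g → A →ₗ[F] A)
    (hLθ : ∀ (ξ : g) (x : Module.Dual F g),
      L ξ (θ x) = -θ (coadAction F g ξ x))
    (hLθdot : ∀ (ξ : g) (x : Module.Dual F g),
      L ξ (θdot x) = -θdot (coadAction F g ξ x))
    (hLmul : ∀ (ξ : g) (x y : Module.Dual F g),
      L ξ (θ x * θ y) = L ξ (θ x) * θ y + θ x * L ξ (θ y)) :
    ∀ μ : Module.Dual F g → A,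
      μ = (fun x => θdot x + (2 : F)⁻¹ •
        (-(∑ i : Fin n, ∑ j : Fin n,
            x ⁅b i, b j⁆ • (θ (b.dualBasis i) * θ (b.dualBasis j))))) →
      (∀ (ξ : g) (x : Module.Dual F g),
        L ξ (μ x) = -μ (coadAction F g ξ x)) ∧
      (∀ x : Module.Dual F g, (∀ ξ : g, coadAction F g ξ x = 0) →
        ∀ ξ : g, L ξ (μ x) = 0) := by
  intro μ hμ
  have key : ∀ (ξ : g) (x : Module.Dual F g),
      L ξ (μ x) = -μ (coadAction F g ξ x) := by
    intro ξ x
    -- L of a single quadratic generator pair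
    have hLT : ∀ i j : Fin n, L ξ (θ (b.dualBasis i) * θ (b.dualBasis j)) =
        (∑ k, (b.dualBasis i ⁅ξ, b k⁆) • (θ (b.dualBasis k) * θ (b.dualBasis j)))
        + ∑ k, (b.dualBasis j ⁅ξ, b k⁆) • (θ (b.dualBasis i) * θ (b.dualBasis k)) := by
      intro i j
      rw [hLmul ξ, hLθ, hLθ, weil_expand F g b A θ ξ (b.dualBasis i),
        weil_expand F g b A θ ξ (b.dualBasis j)]
      rw [← Finset.sum_neg_distrib, ← Finset.sum_neg_distrib, Finset.sum_mul,
        Finset.mul_sum]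
      congr 1
      · exact Finset.sum_congr rfl fun k _ => by
          rw [neg_smul, neg_neg, smul_mul_assoc]
      · exact Finset.sum_congr rfl fun k _ => by
          rw [neg_smul, neg_neg, mul_smul_comm]
    -- coefficient identity from Jacobi
    have hax : ∀ i j : Fin n, (coadAction F g ξ x) ⁅b i, b j⁆
        = -((∑ k, b.dualBasis k ⁅ξ, b i⁆ * x ⁅b k, b j⁆)
            + ∑ k, b.dualBasis k ⁅ξ, b j⁆ * x ⁅b i, b k⁆) := by
      intro i j
      rw [← weil_br_left F g b ξ x i j, ← weil_br_right F g b ξ x i j, ← map_add,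
        ← leibniz_lie]
      simp [coadAction, LieAlgebra.ad_apply]
    -- the central sum identity
    have hS : L ξ (∑ i, ∑ j, x ⁅b i, b j⁆ • (θ (b.dualBasis i) * θ (b.dualBasis j)))
        = -(∑ i, ∑ j, (coadAction F g ξ x) ⁅b i, b j⁆
            • (θ (b.dualBasis i) * θ (b.dualBasis j))) := by
      have step1 : L ξ (∑ i, ∑ j, x ⁅b i, b j⁆ • (θ (b.dualBasis i) * θ (b.dualBasis j)))
          = (∑ i, ∑ j, ∑ k, (x ⁅b i, b j⁆ * b.dualBasis i ⁅ξ, b k⁆)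
              • (θ (b.dualBasis k) * θ (b.dualBasis j)))
            + ∑ i, ∑ j, ∑ k, (x ⁅b i, b j⁆ * b.dualBasis j ⁅ξ, b k⁆)
              • (θ (b.dualBasis i) * θ (b.dualBasis k)) := by
        rw [map_sum]
        simp only [map_sum, map_smul, hLT, smul_add, Finset.smul_sum, smul_smul,
          Finset.sum_add_distrib]
      have step2 : -(∑ i, ∑ j, (coadAction F g ξ x) ⁅b i, b j⁆
            • (θ (b.dualBasis i) * θ (b.dualBasis j)))
          = (∑ i, ∑ j, ∑ k, (b.dualBasis k ⁅ξ, b i⁆ * x ⁅b k, b j⁆)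
              • (θ (b.dualBasis i) * θ (b.dualBasis j)))
            + ∑ i, ∑ j, ∑ k, (b.dualBasis k ⁅ξ, b j⁆ * x ⁅b i, b k⁆)
              • (θ (b.dualBasis i) * θ (b.dualBasis j)) := by
        simp only [hax, neg_smul, Finset.sum_neg_distrib, neg_neg, add_smul,
          Finset.sum_smul, Finset.sum_add_distrib]
      rw [step1, step2]
      congr 1
      · rw [weil_sum_comm3]
        exact Finset.sum_congr rfl fun i _ => Finset.sum_congr rfl fun j _ =>
          Finset.sum_congr rfl fun k _ => by rw [mul_comm]
      · refine Finset.sum_congr rfl fun i _ => ?_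
        rw [Finset.sum_comm]
        exact Finset.sum_congr rfl fun j _ => Finset.sum_congr rfl fun k _ => by
          rw [mul_comm]
    rw [hμ]
    simp only []
    rw [map_add, map_smul, map_neg, hLθdot, hS]
    simp only [smul_neg, neg_neg, neg_add]
  refine ⟨key, fun x hx ξ => ?_⟩
  rw [key ξ x, hx ξ, hμ]
  simp
end

section
/- Let π: E → M be an oriented rank-r vector bundle admitting a Thom form. Then any two Thom forms of E are cohomologous in H_cv^r(E), and the Thom class is the unique class u ∈ H_cv^r(E) with π_*(u) = 1. Moreover H_cv(E) is a free H(M)-module of rank 1 generated by the Thom class. -/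
/-- Let `π : E → M` be an oriented rank-`r` vector bundle admitting a Thom
form.  Abstractly, let `A = Ω(M)` be the de Rham algebra of the base and
`N = Ω_cv(E)` the vertically compactly supported forms on `E`, an `A`-module
via `β • α = β ∧ π*α`, with fibre integration `π_* : N → A` satisfying the
projection formula and commuting with `d` up to sign `(-1)^r`; let
`τ ∈ Ω_cv^r(E)` be a Thom form (`dτ = 0`, `π_*τ = 1`) such that (from the
Paradan–Vergne argument) the Thom map `ζ_*(α) = τ ∧ π*α` is a homotopy
inverse of `π_*`, via a homotopy `κ` with `ζ_*π_* - id = dκ + κd`.  Then: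

* any two Thom forms are cohomologous — the Thom class is the unique class
  `u ∈ H_cv^r(E)` with `π_*(u) = 1`; and
* `H_cv(E)` is a free `H(M)`-module of rank `1` generated by the Thom class:
  every cocycle of `N` is, up to a coboundary, of the form `τ ∧ π*α` with
  `α` a cocycle, and if `τ ∧ π*α` is a coboundary then `α` is a coboundary. -/
theorem thom_class_unique_and_free_module
    (r : ℕ)
    (A : Type) [CommRing A] [Algebra ℝ A] (dM : A →ₗ[ℝ] A)
    (N : Type) [AddCommGroup N] [Module ℝ N]
    (dN : N →ₗ[ℝ] N) (wedge : N →ₗ[ℝ] A →ₗ[ℝ] N)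
    (πst : N →ₗ[ℝ] A)
    (hdM : dM ∘ₗ dM = 0) (hdN : dN ∘ₗ dN = 0)
    (hproj : ∀ (β : N) (α : A), πst (wedge β α) = πst β * α)
    (hπd : dM ∘ₗ πst = ((-1 : ℝ) ^ r) • (πst ∘ₗ dN))
    (hwedge_one : ∀ β : N, wedge β 1 = β)
    (τ : N) (hτclosed : dN τ = 0) (hτint : πst τ = 1)
    (hLeibniz : ∀ α : A,
      dN (wedge τ α) = wedge (dN τ) α + ((-1 : ℝ) ^ r) • wedge τ (dM α))
    (κ : N →ₗ[ℝ] N)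
    (hκ : ∀ β : N, wedge τ (πst β) - β = dN (κ β) + κ (dN β)) :
    (∀ τ' : N, dN τ' = 0 → πst τ' = 1 → ∃ γ : N, τ' - τ = dN γ) ∧
    (∀ β : N, dN β = 0 →
      ∃ (α : A) (γ : N), dM α = 0 ∧ β - wedge τ α = dN γ) ∧
    (∀ α : A, dM α = 0 → (∃ γ : N, wedge τ α = dN γ) →
      ∃ α' : A, α = dM α') := by
  refine ⟨?_, ?_, ?_⟩
  · intro τ' h1 h2
    refine ⟨-(κ τ'), ?_⟩
    have h := hκ τ'
    rw [h2, hwedge_one, h1, map_zero, add_zero] at h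
    rw [map_neg, ← h]
    abel
  · intro β hβ
    refine ⟨πst β, -(κ β), ?_, ?_⟩
    · have := congrArg (fun f => f β) hπd
      simp only [LinearMap.comp_apply, LinearMap.smul_apply] at this
      rw [this, hβ, map_zero, smul_zero]
    · have h := hκ β
      rw [hβ, map_zero, add_zero] at h
      rw [map_neg, ← h]
      abel
  · intro α hα ⟨γ, hγ⟩
    refine ⟨((-1 : ℝ) ^ r) • πst γ, ?_⟩
    have h1 : πst (wedge τ α) = α := by rw [hproj, hτint, one_mul]
    have h2 := congrArg (fun f => f γ) hπd
    simp only [LinearMap.comp_apply, LinearMap.smul_apply] at h2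
    rw [map_smul, h2, ← hγ, h1, smul_smul, ← pow_add, ← two_mul,
      pow_mul, neg_one_sq, one_pow, one_smul]
end
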